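/- Let p ≥ 1 and s ≥ 1 be integers. An arithmetical structure (d,r) on the coconut tree CT(p,s) is smooth if and only if r_{ℓ_j} < r_p for all 1 ≤ j ≤ s and r_1 < r_2 < … < r_p. -/
import Mathlib


/-- The conditions defining an arithmetical structure on the coconut tree `CT(p,s)`:
the path vertices are `v_1, …, v_p` with labels `d i`, `r i` for `1 ≤ i ≤ p`, the
leaves are `ℓ_1, …, ℓ_s` with labels `dl j`, `rl j` for `1 ≤ j ≤ s`; `v_i` is adjacent
to `v_{i+1}` for `1 ≤ i ≤ p - 1` and every leaf is adjacent to `v_p`.  All labels are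
positive, at every vertex `d_v * r_v` equals the sum of the `r`-values of its
neighbors, and the gcd of all the `r`-values is `1`. -/
def IsCTArith (p s : ℕ) (d r dl rl : ℕ → ℕ) : Prop :=
  (∀ i, 1 ≤ i → i ≤ p → 0 < d i) ∧
  (∀ i, 1 ≤ i → i ≤ p → 0 < r i) ∧
  (∀ j, 1 ≤ j → j ≤ s → 0 < dl j) ∧
  (∀ j, 1 ≤ j → j ≤ s → 0 < rl j) ∧
  (∀ i, 1 ≤ i → i ≤ p → d i * r i =
      (if 2 ≤ i then r (i - 1) else 0) +
      (if i < p then r (i + 1) else 0) +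
      (if i = p then ∑ j ∈ Finset.Icc 1 s, rl j else 0)) ∧
  (∀ j, 1 ≤ j → j ≤ s → dl j * rl j = r p) ∧
  Nat.gcd ((Finset.Icc 1 p).gcd r) ((Finset.Icc 1 s).gcd rl) = 1

/-- An arithmetical structure on `CT(p,s)` is smooth if `d_i ≥ 2` for all
`1 ≤ i ≤ p - 1` and `d_{ℓ_j} ≥ 2` for all `1 ≤ j ≤ s`. -/
def IsCTSmooth (p s : ℕ) (d dl : ℕ → ℕ) : Prop :=
  (∀ i, 1 ≤ i → i ≤ p - 1 → 2 ≤ d i) ∧ (∀ j, 1 ≤ j → j ≤ s → 2 ≤ dl j)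

/-- An arithmetical structure `(d, r)` on `CT(p,s)` is smooth if and
only if `r_{ℓ_j} < r_p` for all `1 ≤ j ≤ s` and `r_1 < r_2 < … < r_p`. -/
theorem ct_smooth_iff (p s : ℕ) (hp : 1 ≤ p) (hs : 1 ≤ s)
    (d r dl rl : ℕ → ℕ) (h : IsCTArith p s d r dl rl) :
    IsCTSmooth p s d dl ↔
      ((∀ j, 1 ≤ j → j ≤ s → rl j < r p) ∧
        ∀ i, 1 ≤ i → i ≤ p - 1 → r i < r (i + 1)) := by
  obtain ⟨hd, hr, hdl, hrl, heq, hleaf, hgcd⟩ := h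
  constructor
  · rintro ⟨hsd, hsdl⟩
    constructor
    · intro j hj1 hjs
      have h1 := hleaf j hj1 hjs
      have h2 := hsdl j hj1 hjs
      have h3 := hrl j hj1 hjs
      nlinarith
    · have key : ∀ i, 1 ≤ i → i + 1 ≤ p → r i < r (i + 1) := by
        intro i
        induction i with
        | zero => omega
        | succ n ih =>
          intro h1 h2
          have he := heq (n + 1) (by omega) (by omega)
          rw [if_pos (by omega : n + 1 < p), if_neg (by omega : ¬ n + 1 = p)] at he
          have hd2 := hsd (n + 1) (by omega) (by omega)
          have hrpos := hr (n + 1) (by omega) (by omega)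
          rcases Nat.eq_zero_or_pos n with h0 | h0
          · subst h0
            rw [if_neg (by omega : ¬ 2 ≤ 0 + 1)] at he
            simp only [zero_add] at he ⊢
            nlinarith
          · have hprev := ih (by omega) (by omega)
            rw [if_pos (by omega : 2 ≤ n + 1)] at he
            simp only [Nat.add_sub_cancel] at he
            nlinarith
      intro i hi1 hip
      exact key i hi1 (by omega)
  · rintro ⟨hlt, hmono⟩
    constructor
    · intro i hi1 hip
      have hip' : i < p := by omega
      have he := heq i hi1 (by omega)
      rw [if_pos hip', if_neg (by omega : ¬ i = p)] at he
      have hri := hr i hi1 (by omega)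
      have hlt2 := hmono i hi1 hip
      have hkey : r i < d i * r i := by
        rcases le_or_gt 2 i with h2 | h2
        · rw [if_pos h2] at he
          have := hr (i - 1) (by omega) (by omega)
          omega
        · rw [if_neg (by omega : ¬ 2 ≤ i)] at he
          omega
      nlinarith
    · intro j hj1 hjs
      have h1 := hleaf j hj1 hjs
      have h2 := hlt j hj1 hjs
      have h3 := hrl j hj1 hjs
      have h4 := hdl j hj1 hjs
      rcases (by omega : dl j = 1 ∨ 2 ≤ dl j) with h5 | h5
      · rw [h5, one_mul] at h1; omega
      · exact h5
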